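/- Let W be a vector space, φ(x,z) = x e^z, and let a(z), b(z) ∈ E(W) form a quasi-compatible pair with f(z₁,z₂)a(z₁)b(z₂) ∈ E^{(2)}(W) for some nonzero polynomial f. Suppose α⁺(z), α⁻(z), β(z) ∈ E(W) satisfy: [α^±(z₁), α^±(z₂)] = 0, α⁺(z) ∈ Hom(W, W[[z]]), and [α⁻(z₁), β(z₂)] = β(z₂)·ι_{z₁,z₂}f(z₁,z₂) for some rational function f(z₁,z₂) ∈ ℂ(z₁,z₂). Then, with α(z) = α⁻(z) + α⁺(z), the (-1)-st φ-product satisfies α(z)_{-1}^φ β(z) = α⁺(z)β(z) + β(z)α⁻(z) + β(z)·Res_{z₀} z₀⁻¹ ι_{z,z₀} f(φ(z,z₀), z). -/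

import Mathlib

noncomputable section

open scoped BigOperators

variable {W : Type*} [AddCommGroup W] [Module ℂ W]

/-- The coefficient of `z^a z₀^c` in the substitution `z₁ ↦ z e^{z₀}`, `z₂ ↦ z` of a
two-variable polynomial (or series) `h(z₁,z₂) = ∑ h i j z₁^i z₂^j`. -/
def substCoeff (h : ℤ → ℤ → ℂ) (a : ℤ) (c : ℕ) : ℂ :=
  ∑ᶠ i : ℤ, h i (a - i) * ((i : ℂ) ^ c / (c.factorial : ℂ))

/-- The coefficient of `z₁^a z₂^b` in `h(z₁,z₂)·α(z₁)β(z₂)` applied to `w`, where the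
fields are written as `α(z) = ∑ α e z^e`, `β(z) = ∑ β e z^e`. -/
def prodCoeff (h : ℤ → ℤ → ℂ) (α β : ℤ → Module.End ℂ W) (a b : ℤ) (w : W) : W :=
  ∑ᶠ (i : ℤ) (j : ℤ), h i j • α (a - i) (β (b - j) w)

set_option linter.unusedSectionVars false
set_option maxHeartbeats 1600000

section Aux

variable {V : Type*} [AddCommGroup V] [Module ℂ V]

def stw (c : ℕ) (t : ℤ) : ℂ := (t : ℂ) ^ c / (c.factorial : ℂ)
def gc (F : ℤ → ℕ → ℂ) (G : ℤ → ℕ → V) (a : ℤ) (c : ℕ) : V :=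
  ∑ c' ∈ Finset.range (c + 1), ∑ᶠ a' : ℤ, F a' c' • G (a - a') (c - c')
def lb (F : ℤ → ℕ → V) : Prop := ∀ c : ℕ, ∃ N : ℤ, ∀ a < N, F a c = 0
def conv2 (F : ℤ → ℤ → ℂ) (G : ℤ → ℤ → V) (a b : ℤ) : V :=
  ∑ᶠ i : ℤ, ∑ᶠ j : ℤ, F i j • G (a - i) (b - j)
def sub2 (G : ℤ → ℤ → V) (x : ℤ) (c : ℕ) : V :=
  ∑ᶠ t : ℤ, stw c t • G t (x - t)
lemma fsum_eq (f : ℤ → V) (s : Finset ℤ) (h : ∀ n, f n ≠ 0 → n ∈ s) :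
    ∑ᶠ n, f n = ∑ n ∈ s, f n :=
  finsum_eq_sum_of_support_subset _ (fun n hn => h n hn)
lemma fsum_ne_zero {f : ℤ → V} (h : (∑ᶠ n, f n) ≠ 0) : ∃ n, f n ≠ 0 := by
  by_contra hcon; push_neg at hcon
  exact h (finsum_eq_zero_of_forall_eq_zero hcon)
lemma fsum_finset_sum {γ : Type*} (s : Finset γ) (f : γ → ℤ → V) (S : Finset ℤ)
    (h : ∀ k ∈ s, ∀ n, f k n ≠ 0 → n ∈ S) :
    (∑ᶠ n, ∑ k ∈ s, f k n) = ∑ k ∈ s, ∑ᶠ n, f k n := by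
  rw [fsum_eq (fun n => ∑ k ∈ s, f k n) S (fun n hn => by
    obtain ⟨k, hk, hfk⟩ : ∃ k ∈ s, f k n ≠ 0 := by
      by_contra hcon; push_neg at hcon
      exact hn (Finset.sum_eq_zero hcon)
    exact h k hk n hfk)]
  rw [Finset.sum_comm]
  exact Finset.sum_congr rfl fun k hk => (fsum_eq _ _ (h k hk)).symm
lemma fsum2_eq (f : ℤ → ℤ → V) (S : Finset (ℤ × ℤ)) (hs : ∀ i j, f i j ≠ 0 → (i, j) ∈ S) :
    (∑ᶠ i, ∑ᶠ j, f i j) = ∑ p ∈ S, f p.1 p.2 := by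
  have hinner : ∀ i, (∑ᶠ j, f i j) = ∑ j ∈ S.image Prod.snd, f i j := fun i =>
    fsum_eq _ _ (fun j hj => Finset.mem_image.mpr ⟨(i, j), hs i j hj, rfl⟩)
  have houter : (∑ᶠ i, ∑ᶠ j, f i j) = ∑ i ∈ S.image Prod.fst, ∑ᶠ j, f i j := by
    refine fsum_eq _ _ (fun i hi => ?_)
    by_contra hcon
    apply hi
    have : ∀ j, f i j = 0 := by
      intro j; by_contra hj
      exact hcon (Finset.mem_image.mpr ⟨(i, j), hs i j hj, rfl⟩)
    simp [this]
  rw [houter, Finset.sum_congr rfl (fun i _ => hinner i), ← Finset.sum_product']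
  symm
  refine Finset.sum_subset ?_ ?_
  · intro p hp
    exact Finset.mem_product.mpr ⟨Finset.mem_image.mpr ⟨p, hp, rfl⟩, Finset.mem_image.mpr ⟨p, hp, rfl⟩⟩
  · intro p _ hp
    by_contra hne
    exact hp (hs p.1 p.2 (by simpa using hne))

-- new pieces
lemma conv2_lba (F : ℤ → ℤ → ℂ) (hFnn : ∀ i j : ℤ, i < 0 ∨ j < 0 → F i j = 0)
    (G : ℤ → ℤ → V) (Alo : ℤ) (hGa : ∀ a b : ℤ, a < Alo → G a b = 0) :
    ∀ a b : ℤ, a < Alo → conv2 F G a b = 0 := by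
  intro a b ha
  refine finsum_eq_zero_of_forall_eq_zero fun i => finsum_eq_zero_of_forall_eq_zero fun j => ?_
  rcases lt_or_ge i 0 with hi | hi
  · rw [hFnn i j (Or.inl hi), zero_smul]
  · rw [hGa _ _ (by omega), smul_zero]

lemma conv2_lbb (F : ℤ → ℤ → ℂ) (hFnn : ∀ i j : ℤ, i < 0 ∨ j < 0 → F i j = 0)
    (G : ℤ → ℤ → V) (Blo : ℤ) (hGb : ∀ a b : ℤ, b < Blo → G a b = 0) :
    ∀ a b : ℤ, b < Blo → conv2 F G a b = 0 := by
  intro a b hb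
  refine finsum_eq_zero_of_forall_eq_zero fun i => finsum_eq_zero_of_forall_eq_zero fun j => ?_
  rcases lt_or_ge j 0 with hj | hj
  · rw [hFnn i j (Or.inr hj), zero_smul]
  · rw [hGb _ _ (by omega), smul_zero]

lemma sub2_lb (G : ℤ → ℤ → V) (Alo Blo : ℤ)
    (hGa : ∀ a b : ℤ, a < Alo → G a b = 0) (hGb : ∀ a b : ℤ, b < Blo → G a b = 0) :
    lb (sub2 G) := by
  intro c
  refine ⟨Alo + Blo, fun x hx => finsum_eq_zero_of_forall_eq_zero fun t => ?_⟩
  rcases lt_or_ge t Alo with ht | ht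
  · rw [hGa _ _ ht, smul_zero]
  · rw [hGb _ _ (by omega), smul_zero]

lemma lb_subst (F : ℤ → ℤ → ℂ) (hFnn : ∀ i j : ℤ, i < 0 ∨ j < 0 → F i j = 0) :
    lb (substCoeff F) := by
  intro c
  refine ⟨0, fun a ha => finsum_eq_zero_of_forall_eq_zero fun i => ?_⟩
  rcases lt_or_ge i 0 with hi | hi
  · rw [hFnn i (a - i) (Or.inl hi), zero_mul]
  · rw [hFnn i (a - i) (Or.inr (by omega)), zero_mul]

lemma lb_uniform {F : ℤ → ℕ → V} (hF : lb F) (c : ℕ) :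
    ∃ N : ℤ, ∀ c' ≤ c, ∀ a < N, F a c' = 0 := by
  choose Nf hNf using hF
  refine ⟨((Finset.range (c+1)).image Nf).min' (by simp), fun c' hc' a ha => ?_⟩
  refine hNf c' a (lt_of_lt_of_le ha ?_)
  exact Finset.min'_le _ _ (Finset.mem_image.mpr ⟨c', by simp [Nat.lt_succ_iff, hc'], rfl⟩)

lemma gc_sub_right (F : ℤ → ℕ → ℂ) (A B : ℤ → ℕ → V) (hF : lb F) (hA : lb A) (hB : lb B) :
    gc F (fun x y => A x y - B x y) = fun x y => gc F A x y - gc F B x y := by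
  funext a c
  obtain ⟨NF, hNF⟩ := lb_uniform hF c
  obtain ⟨NA, hNA⟩ := lb_uniform hA c
  obtain ⟨NB, hNB⟩ := lb_uniform hB c
  simp only [gc]
  rw [← Finset.sum_sub_distrib]
  refine Finset.sum_congr rfl fun c' hc' => ?_
  have hc'c : c' ≤ c := Nat.lt_succ_iff.mp (Finset.mem_range.mp hc')
  have key : ∀ a' : ℤ, F a' c' • (A (a - a') (c - c') - B (a - a') (c - c'))
      = F a' c' • A (a - a') (c - c') - F a' c' • B (a - a') (c - c') := fun a' => smul_sub _ _ _
  rw [finsum_congr key]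
  refine finsum_sub_distrib ?_ ?_
  · refine Set.Finite.subset (Set.finite_Icc NF (a - NA)) ?_
    intro a' ha'
    simp only [Function.mem_support] at ha'
    have h1 : F a' c' ≠ 0 := fun hh => ha' (by rw [hh, zero_smul])
    have h2 : A (a - a') (c - c') ≠ 0 := fun hh => ha' (by rw [hh, smul_zero])
    constructor
    · by_contra hcon; exact h1 (hNF c' hc'c _ (by omega))
    · by_contra hcon
      exact h2 (hNA _ (Nat.sub_le _ _) _ (by simp at hcon ⊢; omega))
  · refine Set.Finite.subset (Set.finite_Icc NF (a - NB)) ?_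
    intro a' ha'
    simp only [Function.mem_support] at ha'
    have h1 : F a' c' ≠ 0 := fun hh => ha' (by rw [hh, zero_smul])
    have h2 : B (a - a') (c - c') ≠ 0 := fun hh => ha' (by rw [hh, smul_zero])
    constructor
    · by_contra hcon; exact h1 (hNF c' hc'c _ (by omega))
    · by_contra hcon
      exact h2 (hNB _ (Nat.sub_le _ _) _ (by simp at hcon ⊢; omega))

/-- exchange of two finite 2D convolutions -/
lemma conv2_swap (F₁ F₂ : ℤ → ℤ → ℂ) (S₁ S₂ : Finset (ℤ × ℤ))
    (h₁ : ∀ i j, F₁ i j ≠ 0 → (i, j) ∈ S₁) (h₂ : ∀ i j, F₂ i j ≠ 0 → (i, j) ∈ S₂)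
    (G : ℤ → ℤ → V) :
    conv2 F₁ (conv2 F₂ G) = conv2 F₂ (conv2 F₁ G) := by
  funext a b
  have expand : ∀ (F F' : ℤ → ℤ → ℂ) (S S' : Finset (ℤ × ℤ)),
      (∀ i j, F i j ≠ 0 → (i, j) ∈ S) → (∀ i j, F' i j ≠ 0 → (i, j) ∈ S') →
      conv2 F (conv2 F' G) a b
        = ∑ p ∈ S, ∑ p' ∈ S', (F p.1 p.2 * F' p'.1 p'.2) •
            G (a - p.1 - p'.1) (b - p.2 - p'.2) := by
    intro F F' S S' hS hS'
    rw [conv2]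
    rw [fsum2_eq _ S (fun i j hij => hS i j (fun hF0 => hij (by rw [hF0, zero_smul])))]
    refine Finset.sum_congr rfl fun p _ => ?_
    rw [conv2]
    rw [fsum2_eq _ S' (fun i j hij => hS' i j (fun hF0 => hij (by rw [hF0, zero_smul])))]
    rw [Finset.smul_sum]
    exact Finset.sum_congr rfl fun p' _ => smul_smul _ _ _
  rw [expand F₁ F₂ S₁ S₂ h₁ h₂, expand F₂ F₁ S₂ S₁ h₂ h₁, Finset.sum_comm]
  refine Finset.sum_congr rfl fun p' _ => Finset.sum_congr rfl fun p _ => ?_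
  have e1 : a - p.1 - p'.1 = a - p'.1 - p.1 := by ring
  have e2 : b - p.2 - p'.2 = b - p'.2 - p.2 := by ring
  rw [e1, e2, mul_comm]

lemma stw_zero (c : ℕ) : stw c 0 = if c = 0 then 1 else 0 := by
  cases c with
  | zero => simp [stw]
  | succ n => simp [stw]

lemma stw_zero' (t : ℤ) : stw 0 t = 1 := by simp [stw]

lemma stw_add (c : ℕ) (x y : ℤ) :
    stw c (x + y) = ∑ k ∈ Finset.range (c + 1), stw k x * stw (c - k) y := by
  have h1 : ((x + y : ℤ) : ℂ) = (x : ℂ) + (y : ℂ) := by push_cast; ring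
  rw [stw, h1, add_pow, Finset.sum_div]
  refine Finset.sum_congr rfl fun k hk => ?_
  have hkc : k ≤ c := Nat.lt_succ_iff.mp (Finset.mem_range.mp hk)
  have hfact : (c.choose k : ℂ) * (k.factorial : ℂ) * ((c - k).factorial : ℂ) = (c.factorial : ℂ) := by
    have := Nat.choose_mul_factorial_mul_factorial hkc
    push_cast [← this]; ring
  have hk0 : (k.factorial : ℂ) ≠ 0 := Nat.cast_ne_zero.mpr k.factorial_ne_zero
  have hck0 : ((c - k).factorial : ℂ) ≠ 0 := Nat.cast_ne_zero.mpr (c - k).factorial_ne_zero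
  have hc0 : (c.factorial : ℂ) ≠ 0 := Nat.cast_ne_zero.mpr c.factorial_ne_zero
  have hch : (c.choose k : ℂ) ≠ 0 := Nat.cast_ne_zero.mpr (Nat.choose_pos hkc).ne'
  rw [← hfact]; simp only [stw]
  rw [div_mul_div_comm, mul_comm _ (c.choose k : ℂ), mul_assoc (c.choose k : ℂ), mul_div_mul_left _ _ hch]

lemma sum_tri {M : Type*} [AddCommMonoid M] (c : ℕ) (f : ℕ → ℕ → M) :
    (∑ c' ∈ Finset.range (c + 1), ∑ c₁ ∈ Finset.range (c' + 1), f c' c₁)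
      = ∑ c₁ ∈ Finset.range (c + 1), ∑ c₂ ∈ Finset.range (c - c₁ + 1), f (c₁ + c₂) c₁ := by
  have h1 := Finset.sum_Ico_Ico_comm 0 (c + 1) (fun c₁ c' => f c' c₁)
  simp only [← Finset.range_eq_Ico] at h1
  rw [← h1]
  refine Finset.sum_congr rfl fun c₁ hc₁ => ?_
  rw [Finset.sum_Ico_eq_sum_range]
  have : c + 1 - c₁ = c - c₁ + 1 := by
    have := Finset.mem_range.mp hc₁; omega
  rw [this]

lemma fsum_fsum_comm (f : ℤ → ℤ → V) (S T : Finset ℤ)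
    (h : ∀ x y, f x y ≠ 0 → x ∈ S ∧ y ∈ T) :
    (∑ᶠ x, ∑ᶠ y, f x y) = ∑ᶠ y, ∑ᶠ x, f x y := by
  have h1 : (∑ᶠ x, ∑ᶠ y, f x y) = ∑ x ∈ S, ∑ y ∈ T, f x y := by
    rw [fsum_eq (fun x => ∑ᶠ y, f x y) S (fun x hx => by
      obtain ⟨y, hy⟩ := fsum_ne_zero hx
      exact (h x y hy).1)]
    exact Finset.sum_congr rfl fun x _ => fsum_eq _ _ (fun y hy => (h x y hy).2)
  have h2 : (∑ᶠ y, ∑ᶠ x, f x y) = ∑ y ∈ T, ∑ x ∈ S, f x y := by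
    rw [fsum_eq (fun y => ∑ᶠ x, f x y) T (fun y hy => by
      obtain ⟨x, hx⟩ := fsum_ne_zero hy
      exact (h x y hx).2)]
    exact Finset.sum_congr rfl fun y _ => fsum_eq _ _ (fun x hx => (h x y hx).1)
  rw [h1, h2, Finset.sum_comm]

lemma gc_assoc (F G : ℤ → ℕ → ℂ) (H : ℤ → ℕ → V) (hF : lb F) (hG : lb G) (hH : lb H) :
    gc F (gc G H) = gc (gc F G) H := by
  funext a c
  obtain ⟨NF, hNF⟩ := lb_uniform hF c
  obtain ⟨NG, hNG⟩ := lb_uniform hG c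
  obtain ⟨NH, hNH⟩ := lb_uniform hH c
  -- left side to normal form
  have hL : gc F (gc G H) a c = ∑ c₁ ∈ Finset.range (c + 1), ∑ c₂ ∈ Finset.range (c - c₁ + 1),
      ∑ᶠ a₁ : ℤ, ∑ᶠ a₂ : ℤ, (F a₁ c₁ * G a₂ c₂) • H (a - a₁ - a₂) (c - c₁ - c₂) := by
    refine Finset.sum_congr rfl fun c₁ hc₁ => ?_
    have hc₁c : c₁ ≤ c := Nat.lt_succ_iff.mp (Finset.mem_range.mp hc₁)
    have step1 : ∀ a₁ : ℤ, F a₁ c₁ • gc G H (a - a₁) (c - c₁)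
        = ∑ c₂ ∈ Finset.range (c - c₁ + 1), ∑ᶠ a₂ : ℤ,
            (F a₁ c₁ * G a₂ c₂) • H (a - a₁ - a₂) (c - c₁ - c₂) := by
      intro a₁
      rw [gc, Finset.smul_sum]
      refine Finset.sum_congr rfl fun c₂ hc₂ => ?_
      rw [smul_finsum' _ (Set.Finite.subset (Set.finite_Icc NG (a - a₁ - NH)) ?_)]
      · exact finsum_congr fun a₂ => smul_smul _ _ _
      · intro a₂ ha₂
        simp only [Function.mem_support] at ha₂
        have hg : G a₂ c₂ ≠ 0 := fun hh => ha₂ (by rw [hh, zero_smul])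
        have hh' : H (a - a₁ - a₂) (c - c₁ - c₂) ≠ 0 := fun hh => ha₂ (by rw [hh, smul_zero])
        have hb1 : NG ≤ a₂ := by
          by_contra hcon
          exact hg (hNG c₂ (le_trans (Nat.lt_succ_iff.mp (Finset.mem_range.mp hc₂)) (Nat.sub_le _ _)) _ (by omega))
        have hb2 : NH ≤ a - a₁ - a₂ := by
          by_contra hcon
          exact hh' (hNH _ (le_trans (Nat.sub_le _ _) (Nat.sub_le _ _)) _ (by omega))
        exact Set.mem_Icc.mpr ⟨hb1, by omega⟩
    rw [finsum_congr step1]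
    refine fsum_finset_sum _ _ (Finset.Icc NF (a - NG - NH)) ?_
    intro c₂ hc₂ a₁ hne
    obtain ⟨a₂, ha₂⟩ := fsum_ne_zero hne
    have hf : F a₁ c₁ ≠ 0 := fun hh => ha₂ (by rw [hh, zero_mul, zero_smul])
    have hg : G a₂ c₂ ≠ 0 := fun hh => ha₂ (by rw [hh, mul_zero, zero_smul])
    have hh' : H (a - a₁ - a₂) (c - c₁ - c₂) ≠ 0 := fun hh => ha₂ (by rw [hh, smul_zero])
    have hb1 : NF ≤ a₁ := by
      by_contra hcon; exact hf (hNF c₁ hc₁c _ (by omega))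
    have hb2 : NG ≤ a₂ := by
      by_contra hcon
      exact hg (hNG c₂ (le_trans (Nat.lt_succ_iff.mp (Finset.mem_range.mp hc₂)) (Nat.sub_le _ _)) _ (by omega))
    have hb3 : NH ≤ a - a₁ - a₂ := by
      by_contra hcon
      exact hh' (hNH _ (le_trans (Nat.sub_le _ _) (Nat.sub_le _ _)) _ (by omega))
    exact Finset.mem_Icc.mpr ⟨hb1, by omega⟩
  -- right side to normal form
  have hR : gc (gc F G) H a c = ∑ c₁ ∈ Finset.range (c + 1), ∑ c₂ ∈ Finset.range (c - c₁ + 1),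
      ∑ᶠ a₁ : ℤ, ∑ᶠ a₂ : ℤ, (F a₁ c₁ * G a₂ c₂) • H (a - a₁ - a₂) (c - c₁ - c₂) := by
    have step1 : gc (gc F G) H a c = ∑ c' ∈ Finset.range (c + 1),
        ∑ c₁ ∈ Finset.range (c' + 1), ∑ᶠ a' : ℤ, ∑ᶠ a₁ : ℤ,
          (F a₁ c₁ * G (a' - a₁) (c' - c₁)) • H (a - a') (c - c') := by
      refine Finset.sum_congr rfl fun c' hc' => ?_
      have hc'c : c' ≤ c := Nat.lt_succ_iff.mp (Finset.mem_range.mp hc')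
      have hpt : ∀ a' : ℤ, gc F G a' c' • H (a - a') (c - c')
          = ∑ c₁ ∈ Finset.range (c' + 1), ∑ᶠ a₁ : ℤ,
              (F a₁ c₁ * G (a' - a₁) (c' - c₁)) • H (a - a') (c - c') := by
        intro a'
        rw [gc, Finset.sum_smul]
        refine Finset.sum_congr rfl fun c₁ hc₁ => ?_
        have hfin : (Function.support fun a₁ : ℤ => F a₁ c₁ * G (a' - a₁) (c' - c₁)).Finite := by
          refine Set.Finite.subset (Set.finite_Icc NF (a' - NG)) ?_
          intro a₁ ha₁
          simp only [Function.mem_support] at ha₁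
          have hf : F a₁ c₁ ≠ 0 := fun hh => ha₁ (by rw [hh, zero_mul])
          have hg : G (a' - a₁) (c' - c₁) ≠ 0 := fun hh => ha₁ (by rw [hh, mul_zero])
          have hb1 : NF ≤ a₁ := by
            by_contra hcon
            exact hf (hNF c₁ (le_trans (Nat.lt_succ_iff.mp (Finset.mem_range.mp hc₁)) hc'c) _ (by omega))
          have hb2 : NG ≤ a' - a₁ := by
            by_contra hcon
            exact hg (hNG _ (le_trans (Nat.sub_le _ _) hc'c) _ (by omega))
          exact Set.mem_Icc.mpr ⟨hb1, by omega⟩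
        simp only [smul_eq_mul]
        rw [finsum_smul' hfin]
      rw [finsum_congr hpt]
      refine fsum_finset_sum _ _ (Finset.Icc (NF + NG) (a - NH)) ?_
      intro c₁ hc₁ a' hne
      obtain ⟨a₁, ha₁⟩ := fsum_ne_zero hne
      have hf : F a₁ c₁ ≠ 0 := fun hh => ha₁ (by rw [hh, zero_mul, zero_smul])
      have hg : G (a' - a₁) (c' - c₁) ≠ 0 := fun hh => ha₁ (by rw [hh, mul_zero, zero_smul])
      have hh' : H (a - a') (c - c') ≠ 0 := fun hh => ha₁ (by rw [hh, smul_zero])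
      have hb1 : NF ≤ a₁ := by
        by_contra hcon
        exact hf (hNF c₁ (le_trans (Nat.lt_succ_iff.mp (Finset.mem_range.mp hc₁)) hc'c) _ (by omega))
      have hb2 : NG ≤ a' - a₁ := by
        by_contra hcon
        exact hg (hNG _ (le_trans (Nat.sub_le _ _) hc'c) _ (by omega))
      have hb3 : NH ≤ a - a' := by
        by_contra hcon
        exact hh' (hNH _ (Nat.sub_le _ _) _ (by omega))
      exact Finset.mem_Icc.mpr ⟨by omega, by omega⟩
    rw [step1]
    have step2 : ∀ c' ∈ Finset.range (c + 1), ∀ c₁ ∈ Finset.range (c' + 1),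
        (∑ᶠ a' : ℤ, ∑ᶠ a₁ : ℤ, (F a₁ c₁ * G (a' - a₁) (c' - c₁)) • H (a - a') (c - c'))
          = ∑ᶠ a₁ : ℤ, ∑ᶠ a₂ : ℤ, (F a₁ c₁ * G a₂ (c' - c₁)) • H (a - a₁ - a₂) (c - c') := by
      intro c' hc' c₁ hc₁
      have hc'c : c' ≤ c := Nat.lt_succ_iff.mp (Finset.mem_range.mp hc')
      have hc₁c : c₁ ≤ c := le_trans (Nat.lt_succ_iff.mp (Finset.mem_range.mp hc₁)) hc'c
      rw [fsum_fsum_comm _ (Finset.Icc (NF + NG) (a - NH)) (Finset.Icc NF (a - NG - NH)) ?_]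
      · refine finsum_congr fun a₁ => ?_
        rw [← finsum_comp_equiv (Equiv.addLeft a₁)]
        refine finsum_congr fun a₂ => ?_
        have e1 : (Equiv.addLeft a₁) a₂ = a₁ + a₂ := rfl
        rw [e1]
        have e2 : a₁ + a₂ - a₁ = a₂ := by ring
        have e3 : a - (a₁ + a₂) = a - a₁ - a₂ := by ring
        rw [e2, e3]
      · intro a' a₁ hne
        have hf : F a₁ c₁ ≠ 0 := fun hh => hne (by rw [hh, zero_mul, zero_smul])
        have hg : G (a' - a₁) (c' - c₁) ≠ 0 := fun hh => hne (by rw [hh, mul_zero, zero_smul])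
        have hh' : H (a - a') (c - c') ≠ 0 := fun hh => hne (by rw [hh, smul_zero])
        have hb1 : NF ≤ a₁ := by
          by_contra hcon; exact hf (hNF c₁ hc₁c _ (by omega))
        have hb2 : NG ≤ a' - a₁ := by
          by_contra hcon
          exact hg (hNG _ (le_trans (Nat.sub_le _ _) hc'c) _ (by omega))
        have hb3 : NH ≤ a - a' := by
          by_contra hcon
          exact hh' (hNH _ (Nat.sub_le _ _) _ (by omega))
        exact ⟨Finset.mem_Icc.mpr ⟨by omega, by omega⟩, Finset.mem_Icc.mpr ⟨hb1, by omega⟩⟩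
    rw [Finset.sum_congr rfl (fun c' hc' => Finset.sum_congr rfl (fun c₁ hc₁ => step2 c' hc' c₁ hc₁))]
    rw [sum_tri c (fun c' c₁ => ∑ᶠ a₁ : ℤ, ∑ᶠ a₂ : ℤ, (F a₁ c₁ * G a₂ (c' - c₁)) • H (a - a₁ - a₂) (c - c'))]
    refine Finset.sum_congr rfl fun c₁ hc₁ => Finset.sum_congr rfl fun c₂ hc₂ => ?_
    have e4 : c₁ + c₂ - c₁ = c₂ := by omega
    have e5 : c - (c₁ + c₂) = c - c₁ - c₂ := by omega
    rw [e4, e5]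
  rw [hL, hR]

lemma gc_comm (F G : ℤ → ℕ → ℂ) (a : ℤ) (c : ℕ) : gc F G a c = gc G F a c := by
  rw [gc, gc, ← Finset.sum_range_reflect]
  refine Finset.sum_congr rfl fun c' hc' => ?_
  have hc'c : c' ≤ c := Nat.lt_succ_iff.mp (Finset.mem_range.mp hc')
  have e1 : c + 1 - 1 - c' = c - c' := by omega
  rw [e1]
  have e2 : c - (c - c') = c' := by omega
  rw [e2]
  rw [← finsum_comp_equiv (Equiv.subLeft a)]
  refine finsum_congr fun a' => ?_
  have e3 : (Equiv.subLeft a) a' = a - a' := rfl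
  rw [e3]
  have e4 : a - (a - a') = a' := by ring
  rw [e4, smul_eq_mul, smul_eq_mul, mul_comm]

def dlt : ℤ → ℕ → ℂ := fun a c => if a = 0 ∧ c = 0 then 1 else 0

lemma gc_dlt (G : ℤ → ℕ → V) : gc dlt G = G := by
  funext a c
  rw [gc]
  rw [Finset.sum_eq_single_of_mem 0 (Finset.mem_range.mpr (Nat.succ_pos c))]
  · rw [finsum_eq_single _ (0 : ℤ)]
    · simp [dlt]
    · intro a' ha'
      simp [dlt, ha']
  · intro c' _ hc'
    refine finsum_eq_zero_of_forall_eq_zero fun a' => ?_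
    simp [dlt, hc']

lemma gc_add_right (F : ℤ → ℕ → ℂ) (A B : ℤ → ℕ → V) (hF : lb F) (hA : lb A) (hB : lb B) :
    gc F (fun x y => A x y + B x y) = fun x y => gc F A x y + gc F B x y := by
  funext a c
  obtain ⟨NF, hNF⟩ := lb_uniform hF c
  obtain ⟨NA, hNA⟩ := lb_uniform hA c
  obtain ⟨NB, hNB⟩ := lb_uniform hB c
  simp only [gc]
  rw [← Finset.sum_add_distrib]
  refine Finset.sum_congr rfl fun c' hc' => ?_
  have hc'c : c' ≤ c := Nat.lt_succ_iff.mp (Finset.mem_range.mp hc')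
  have key : ∀ a' : ℤ, F a' c' • (A (a - a') (c - c') + B (a - a') (c - c'))
      = F a' c' • A (a - a') (c - c') + F a' c' • B (a - a') (c - c') := fun a' => smul_add _ _ _
  rw [finsum_congr key]
  refine finsum_add_distrib ?_ ?_
  · refine Set.Finite.subset (Set.finite_Icc NF (a - NA)) ?_
    intro a' ha'
    simp only [Function.mem_support] at ha'
    have h1 : F a' c' ≠ 0 := fun hh => ha' (by rw [hh, zero_smul])
    have h2 : A (a - a') (c - c') ≠ 0 := fun hh => ha' (by rw [hh, smul_zero])
    constructor
    · by_contra hcon; exact h1 (hNF c' hc'c _ (by omega))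
    · by_contra hcon
      exact h2 (hNA _ (Nat.sub_le _ _) _ (by simp at hcon ⊢; omega))
  · refine Set.Finite.subset (Set.finite_Icc NF (a - NB)) ?_
    intro a' ha'
    simp only [Function.mem_support] at ha'
    have h1 : F a' c' ≠ 0 := fun hh => ha' (by rw [hh, zero_smul])
    have h2 : B (a - a') (c - c') ≠ 0 := fun hh => ha' (by rw [hh, smul_zero])
    constructor
    · by_contra hcon; exact h1 (hNF c' hc'c _ (by omega))
    · by_contra hcon
      exact h2 (hNB _ (Nat.sub_le _ _) _ (by simp at hcon ⊢; omega))

lemma gc_cancel (F : ℤ → ℕ → ℂ) (hF : lb F) (hFne : ∃ a c, F a c ≠ 0)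
    (Z : ℤ → ℕ → V) (hZ : lb Z) (hgc : ∀ a c, gc F Z a c = 0) : ∀ a c, Z a c = 0 := by
  by_contra hcon
  push_neg at hcon
  obtain ⟨b0, d0, hbd⟩ := hcon
  -- minimal layer of F
  have hFex : ∃ c : ℕ, ∃ a, F a c ≠ 0 := by
    obtain ⟨a, c, hac⟩ := hFne; exact ⟨c, a, hac⟩
  classical
  let c₀ := Nat.find hFex
  obtain ⟨aw, haw⟩ := Nat.find_spec hFex
  have hFmin : ∀ c' < c₀, ∀ a, F a c' = 0 := by
    intro c' hc' a
    by_contra hne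
    exact Nat.find_min hFex hc' ⟨a, hne⟩
  -- minimal layer of Z
  have hZex : ∃ c : ℕ, ∃ a, Z a c ≠ 0 := ⟨d0, b0, hbd⟩
  let d := Nat.find hZex
  obtain ⟨bw, hbw⟩ := Nat.find_spec hZex
  have hZmin : ∀ c' < d, ∀ a, Z a c' = 0 := by
    intro c' hc' a
    by_contra hne
    exact Nat.find_min hZex hc' ⟨a, hne⟩
  -- least support element of layer c₀ of F
  obtain ⟨NF, hNF⟩ := hF c₀
  obtain ⟨a₀, ha₀, ha₀min⟩ := Int.exists_least_of_bdd (P := fun z => F z c₀ ≠ 0)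
    ⟨NF, fun z hz => by by_contra hc; exact hz (hNF z (by omega))⟩ ⟨aw, haw⟩
  -- least support element of layer d of Z
  obtain ⟨NZ, hNZ⟩ := hZ d
  obtain ⟨b, hb, hbmin⟩ := Int.exists_least_of_bdd (P := fun z => Z z d ≠ 0)
    ⟨NZ, fun z hz => by by_contra hc; exact hz (hNZ z (by omega))⟩ ⟨bw, hbw⟩
  have key : gc F Z (a₀ + b) (c₀ + d) = F a₀ c₀ • Z b d := by
    rw [gc]
    rw [Finset.sum_eq_single_of_mem c₀ (Finset.mem_range.mpr (by omega))]
    · have e1 : c₀ + d - c₀ = d := by omega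
      rw [e1]
      rw [finsum_eq_single _ a₀]
      · have e2 : a₀ + b - a₀ = b := by ring
        rw [e2]
      · intro a' ha'
        rcases lt_or_gt_of_ne ha' with hlt | hgt
        · have hF0 : F a' c₀ = 0 := by
            by_contra hne
            have := ha₀min _ hne
            omega
          rw [hF0, zero_smul]
        · have hZ0 : Z (a₀ + b - a') d = 0 := by
            by_contra hne
            have := hbmin _ hne
            omega
          rw [hZ0, smul_zero]
    · intro c' hc' hne
      rcases lt_or_gt_of_ne hne with hlt | hgt
      · refine finsum_eq_zero_of_forall_eq_zero fun a' => ?_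
        rw [hFmin c' hlt, zero_smul]
      · have hcr := Finset.mem_range.mp hc'
        refine finsum_eq_zero_of_forall_eq_zero fun a' => ?_
        rw [hZmin (c₀ + d - c') (by omega), smul_zero]
  rw [hgc] at key
  exact (smul_ne_zero ha₀ hb key.symm).elim

lemma sub2_conv2 (F : ℤ → ℤ → ℂ) (SF : Finset (ℤ × ℤ)) (hSF : ∀ i j, F i j ≠ 0 → (i, j) ∈ SF)
    (hFnn : ∀ i j : ℤ, i < 0 ∨ j < 0 → F i j = 0)
    (G : ℤ → ℤ → V) (Alo Blo : ℤ)
    (hGa : ∀ a b : ℤ, a < Alo → G a b = 0) (hGb : ∀ a b : ℤ, b < Blo → G a b = 0) :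
    sub2 (conv2 F G) = gc (substCoeff F) (sub2 G) := by
  funext x c
  -- normal form
  set NF : V := ∑ k ∈ Finset.range (c + 1), ∑ p ∈ SF,
      ∑ᶠ u : ℤ, (F p.1 p.2 * stw k p.1 * stw (c - k) u) • G u (x - p.1 - p.2 - u) with hNF
  have hL : sub2 (conv2 F G) x c = NF := by
    rw [sub2]
    have hpt : ∀ t : ℤ, stw c t • conv2 F G t (x - t)
        = ∑ p ∈ SF, (stw c t * F p.1 p.2) • G (t - p.1) (x - t - p.2) := by
      intro t
      rw [conv2, fsum2_eq _ SF (fun i j hij => hSF i j (fun hF0 => hij (by rw [hF0, zero_smul])))]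
      rw [Finset.smul_sum]
      exact Finset.sum_congr rfl fun p _ => smul_smul _ _ _
    rw [finsum_congr hpt]
    rw [fsum_finset_sum _ _ (Finset.Icc Alo (x - Blo)) ?_]
    · rw [hNF, Finset.sum_comm]
      refine Finset.sum_congr rfl fun p hp => ?_
      rw [← finsum_comp_equiv (Equiv.addLeft p.1)]
      have hpt2 : ∀ u : ℤ, (stw c ((Equiv.addLeft p.1) u) * F p.1 p.2) •
            G ((Equiv.addLeft p.1) u - p.1) (x - (Equiv.addLeft p.1) u - p.2)
          = ∑ k ∈ Finset.range (c + 1),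
              (F p.1 p.2 * stw k p.1 * stw (c - k) u) • G u (x - p.1 - p.2 - u) := by
        intro u
        have e1 : (Equiv.addLeft p.1) u = p.1 + u := rfl
        rw [e1]
        have e2 : p.1 + u - p.1 = u := by ring
        have e3 : x - (p.1 + u) - p.2 = x - p.1 - p.2 - u := by ring
        rw [e2, e3, stw_add, Finset.sum_mul, Finset.sum_smul]
        exact Finset.sum_congr rfl fun k _ => congrArg (· • _) (by ring)
      rw [finsum_congr hpt2]
      refine fsum_finset_sum _ _ (Finset.Icc Alo (x - p.1 - p.2 - Blo)) ?_
      intro k _ u hu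
      have hG0 : G u (x - p.1 - p.2 - u) ≠ 0 := fun hh => hu (by rw [hh, smul_zero])
      have hb1 : Alo ≤ u := by by_contra hcon; exact hG0 (hGa _ _ (by omega))
      have hb2 : Blo ≤ x - p.1 - p.2 - u := by by_contra hcon; exact hG0 (hGb _ _ (by omega))
      exact Finset.mem_Icc.mpr ⟨hb1, by omega⟩
    · intro p _ t ht
      have hF0 : F p.1 p.2 ≠ 0 := fun hh => ht (by rw [hh, mul_zero, zero_smul])
      have hG0 : G (t - p.1) (x - t - p.2) ≠ 0 := fun hh => ht (by rw [hh, smul_zero])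
      have hp1 : 0 ≤ p.1 := by by_contra hcon; exact hF0 (hFnn _ _ (Or.inl (by omega)))
      have hp2 : 0 ≤ p.2 := by by_contra hcon; exact hF0 (hFnn _ _ (Or.inr (by omega)))
      have hb1 : Alo ≤ t - p.1 := by by_contra hcon; exact hG0 (hGa _ _ (by omega))
      have hb2 : Blo ≤ x - t - p.2 := by by_contra hcon; exact hG0 (hGb _ _ (by omega))
      exact Finset.mem_Icc.mpr ⟨by omega, by omega⟩
  have hR : gc (substCoeff F) (sub2 G) x c = NF := by
    rw [gc, hNF]
    refine Finset.sum_congr rfl fun k hk => ?_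
    have hpt : ∀ a' : ℤ, substCoeff F a' k • sub2 G (x - a') (c - k)
        = ∑ i ∈ SF.image Prod.fst, ((F i (a' - i) * stw k i) • sub2 G (x - a') (c - k)) := by
      intro a'
      have hsc : substCoeff F a' k = ∑ i ∈ SF.image Prod.fst, F i (a' - i) * stw k i :=
        fsum_eq (fun i => F i (a' - i) * stw k i) (SF.image Prod.fst)
          (fun i hi => by
            have hF0 : F i (a' - i) ≠ 0 := fun hh => hi (by simp [hh])
            exact Finset.mem_image.mpr ⟨(i, a' - i), hSF _ _ hF0, rfl⟩)
      rw [hsc, Finset.sum_smul]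
    rw [finsum_congr hpt]
    rw [fsum_eq _ (SF.image fun p : ℤ × ℤ => p.1 + p.2) ?_]
    · set T : ℤ × ℤ → V := fun p => (F p.1 p.2 * stw k p.1) • sub2 G (x - p.1 - p.2) (c - k) with hT
      have step1 : ∀ a' ∈ SF.image (fun p : ℤ × ℤ => p.1 + p.2),
          (∑ i ∈ SF.image Prod.fst, (F i (a' - i) * stw k i) • sub2 G (x - a') (c - k))
            = ∑ i ∈ SF.image Prod.fst, T (i, a' - i) := by
        intro a' _
        refine Finset.sum_congr rfl fun i _ => ?_
        rw [hT]
        have e1 : x - i - (a' - i) = x - a' := by ring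
        simp only [e1]
      rw [Finset.sum_congr rfl step1, ← Finset.sum_product']
      have hinj : ∀ q1 ∈ (SF.image fun p : ℤ × ℤ => p.1 + p.2) ×ˢ SF.image Prod.fst,
          ∀ q2 ∈ (SF.image fun p : ℤ × ℤ => p.1 + p.2) ×ˢ SF.image Prod.fst,
          (fun q : ℤ × ℤ => (q.2, q.1 - q.2)) q1 = (fun q : ℤ × ℤ => (q.2, q.1 - q.2)) q2 →
            q1 = q2 := by
        intro q1 _ q2 _ hq
        have h1 : q1.2 = q2.2 := congrArg Prod.fst hq
        have h2 : q1.1 - q1.2 = q2.1 - q2.2 := congrArg Prod.snd hq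
        exact Prod.ext (by omega) h1
      have step2 : (∑ q ∈ (SF.image fun p : ℤ × ℤ => p.1 + p.2) ×ˢ SF.image Prod.fst,
          T (q.2, q.1 - q.2))
          = ∑ p ∈ ((SF.image fun p : ℤ × ℤ => p.1 + p.2) ×ˢ SF.image Prod.fst).image
              (fun q : ℤ × ℤ => (q.2, q.1 - q.2)), T p := (Finset.sum_image hinj).symm
      rw [step2]
      have step3 : (∑ p ∈ ((SF.image fun p : ℤ × ℤ => p.1 + p.2) ×ˢ SF.image Prod.fst).image
              (fun q : ℤ × ℤ => (q.2, q.1 - q.2)), T p) = ∑ p ∈ SF, T p := by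
        symm
        refine Finset.sum_subset ?_ ?_
        · intro p hp
          refine Finset.mem_image.mpr ⟨(p.1 + p.2, p.1), ?_, ?_⟩
          · exact Finset.mem_product.mpr ⟨Finset.mem_image.mpr ⟨p, hp, rfl⟩,
              Finset.mem_image.mpr ⟨p, hp, rfl⟩⟩
          · simp
        · intro p _ hp
          have hF0 : F p.1 p.2 = 0 := by
            by_contra hne; exact hp (hSF _ _ hne)
          rw [hT]
          simp only [hF0, zero_mul, zero_smul]
      rw [step3]
      refine Finset.sum_congr rfl fun p hp => ?_
      rw [hT]
      simp only [sub2]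
      rw [smul_finsum' _ (Set.Finite.subset (Set.finite_Icc Alo (x - p.1 - p.2 - Blo)) ?_)]
      · refine finsum_congr fun u => ?_
        rw [smul_smul]
      · intro u hu
        simp only [Function.mem_support] at hu
        have hG0 : G u (x - p.1 - p.2 - u) ≠ 0 := fun hh => hu (by rw [hh, smul_zero])
        have hb1 : Alo ≤ u := by by_contra hcon; exact hG0 (hGa _ _ (by omega))
        have hb2 : Blo ≤ x - p.1 - p.2 - u := by by_contra hcon; exact hG0 (hGb _ _ (by omega))
        exact Set.mem_Icc.mpr ⟨hb1, by omega⟩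
    · intro a' ha'
      obtain ⟨i, hi⟩ : ∃ i, (F i (a' - i) * stw k i) • sub2 G (x - a') (c - k) ≠ 0 := by
        by_contra hcon
        push_neg at hcon
        exact ha' (Finset.sum_eq_zero fun i _ => hcon i)
      have hF0 : F i (a' - i) ≠ 0 := fun hh => hi (by rw [hh, zero_mul, zero_smul])
      exact Finset.mem_image.mpr ⟨(i, a' - i), hSF _ _ hF0, by simp⟩
  rw [hL, hR]

lemma subst_ne (q : ℤ → ℤ → ℂ) (Sq : Finset (ℤ × ℤ)) (hSq : ∀ i j, q i j ≠ 0 → (i, j) ∈ Sq)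
    (hqne : ∃ i j, q i j ≠ 0) : ∃ a c, substCoeff q a c ≠ 0 := by
  classical
  obtain ⟨i₀, j₀, hq0⟩ := hqne
  set a : ℤ := i₀ + j₀ with ha
  set g : ℤ → ℂ := fun i => q i (a - i) with hg
  have hgi₀ : g i₀ ≠ 0 := by
    rw [hg]; simp only [ha]
    have : i₀ + j₀ - i₀ = j₀ := by ring
    rw [this]; exact hq0
  set s₀ : Finset ℤ := (Sq.image Prod.fst).filter (fun i => g i ≠ 0) with hs₀
  have hi₀s : i₀ ∈ s₀ := by
    refine Finset.mem_filter.mpr ⟨?_, hgi₀⟩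
    exact Finset.mem_image.mpr ⟨(i₀, a - i₀), hSq _ _ (by rwa [hg] at hgi₀), rfl⟩
  have hsupp : ∀ i : ℤ, g i ≠ 0 → i ∈ s₀ := by
    intro i hi
    exact Finset.mem_filter.mpr ⟨Finset.mem_image.mpr ⟨(i, a - i), hSq _ _ hi, rfl⟩, hi⟩
  refine ⟨a, ?_⟩
  by_contra hcon
  push_neg at hcon
  -- power sums vanish
  have hps : ∀ k : ℕ, (∑ i ∈ s₀, g i * (i : ℂ) ^ k) = 0 := by
    intro k
    have h1 : substCoeff q a k = ∑ i ∈ s₀, g i * ((i : ℂ) ^ k / (k.factorial : ℂ)) :=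
      fsum_eq (fun i => g i * ((i : ℂ) ^ k / (k.factorial : ℂ))) s₀
        (fun i hi => hsupp i (fun hh => hi (by simp [hh])))
    have hk0 : (k.factorial : ℂ) ≠ 0 := Nat.cast_ne_zero.mpr k.factorial_ne_zero
    have h2 : (∑ i ∈ s₀, g i * (i : ℂ) ^ k) = (k.factorial : ℂ) * substCoeff q a k := by
      rw [h1, Finset.mul_sum]
      refine Finset.sum_congr rfl fun i _ => ?_
      field_simp
    rw [h2, hcon, mul_zero]
  -- interpolation polynomial
  set Ψ : Polynomial ℂ := ∏ i ∈ s₀.erase i₀, (Polynomial.X - Polynomial.C (i : ℂ)) with hΨ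
  have heval : ∀ i ∈ s₀, i ≠ i₀ → Ψ.eval (i : ℂ) = 0 := by
    intro i hi hne
    rw [hΨ, Polynomial.eval_prod]
    refine Finset.prod_eq_zero (Finset.mem_erase.mpr ⟨hne, hi⟩) ?_
    simp
  have heval₀ : Ψ.eval (i₀ : ℂ) ≠ 0 := by
    rw [hΨ, Polynomial.eval_prod]
    refine Finset.prod_ne_zero_iff.mpr fun i hi => ?_
    have hne : i ≠ i₀ := (Finset.mem_erase.mp hi).1
    simp only [Polynomial.eval_sub, Polynomial.eval_X, Polynomial.eval_C, sub_ne_zero]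
    intro hh
    exact hne (Int.cast_injective (α := ℂ) hh.symm)
  have hkey : (∑ i ∈ s₀, g i * Ψ.eval (i : ℂ)) = g i₀ * Ψ.eval (i₀ : ℂ) := by
    rw [Finset.sum_eq_single_of_mem i₀ hi₀s]
    intro i hi hne
    rw [heval i hi hne, mul_zero]
  have hzero : (∑ i ∈ s₀, g i * Ψ.eval (i : ℂ)) = 0 := by
    have hpt : ∀ i ∈ s₀, g i * Ψ.eval (i : ℂ)
        = ∑ k ∈ Finset.range (Ψ.natDegree + 1), Ψ.coeff k * (g i * (i : ℂ) ^ k) := by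
      intro i _
      rw [Polynomial.eval_eq_sum_range, Finset.mul_sum]
      exact Finset.sum_congr rfl fun k _ => by ring
    rw [Finset.sum_congr rfl hpt, Finset.sum_comm]
    refine Finset.sum_eq_zero fun k _ => ?_
    rw [← Finset.mul_sum, hps, mul_zero]
  rw [hzero] at hkey
  exact (mul_ne_zero hgi₀ heval₀ hkey.symm).elim

lemma gc_lb {F : ℤ → ℕ → ℂ} {G : ℤ → ℕ → V} (hF : lb F) (hG : lb G) : lb (gc F G) := by
  intro c
  obtain ⟨NF, hNF⟩ := lb_uniform hF c
  obtain ⟨NG, hNG⟩ := lb_uniform hG c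
  refine ⟨NF + NG, fun a ha => ?_⟩
  refine Finset.sum_eq_zero fun c' hc' => ?_
  refine finsum_eq_zero_of_forall_eq_zero fun a' => ?_
  rcases le_or_gt NF a' with h1 | h1
  · rw [hNG (c - c') (Nat.sub_le _ _) _ (by omega), smul_zero]
  · rw [hNF c' (Nat.lt_succ_iff.mp (Finset.mem_range.mp hc')) _ h1, zero_smul]

lemma gc_comm' (F G : ℤ → ℕ → ℂ) : gc F G = gc G F :=
  funext fun a => funext fun c => gc_comm F G a c

end Aux

def g12 {W : Type*} [AddCommGroup W] [Module ℂ W] (αp αm β : ℤ → Module.End ℂ W) (w : W) :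
    ℤ → ℤ → W := fun a b => αp a (β b w) + β b (αm a w)

def g3 {W : Type*} [AddCommGroup W] [Module ℂ W] (Fι : ℤ → ℤ → ℂ) (β : ℤ → Module.End ℂ W)
    (w : W) : ℤ → ℤ → W := fun a b => ∑ᶠ e : ℤ, Fι a (b - e) • β e w

def gB {W : Type*} [AddCommGroup W] [Module ℂ W] (β : ℤ → Module.End ℂ W) (w : W) :
    ℤ → ℤ → W := fun a b => if a = 0 then β b w else 0

def bB {W : Type*} [AddCommGroup W] [Module ℂ W] (β : ℤ → Module.End ℂ W) (w : W) :
    ℤ → ℕ → W := fun x c => if c = 0 then β x w else 0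

/-- Let `φ(x,z) = xe^z`, and let `α⁺(z), α⁻(z), β(z)` be fields on `W` (written here as
`α⁺(z) = ∑ αp e z^e` etc.) such that `[α^±(z₁),α^±(z₂)] = 0`, `α⁺(z) ∈ Hom(W,W[[z]])`,
and `[α⁻(z₁), β(z₂)] = β(z₂)·ι_{z₁,z₂}f(z₁,z₂)` for a rational function
`f = p/q ∈ ℂ(z₁,z₂)`, encoded by its `ι_{z₁,z₂}`-expansion `Fι` and by the
`ι_{z,z₀}`-expansion `Fφ` of `f(ze^{z₀},z)`.  Assume the pair `(α,β)` (with
`α = α⁺ + α⁻`) is quasi-compatible: `h(z₁,z₂)α(z₁)β(z₂) ∈ E^{(2)}(W)` for a nonzero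
polynomial `h`, whose inverse expansion `ι_{z,z₀}h(ze^{z₀},z)⁻¹` is encoded by `Hinv`.
Then the `(-1)`-st `φ`-product satisfies
`α(z)₋₁^φ β(z) = α⁺(z)β(z) + β(z)α⁻(z) + β(z)·Res_{z₀} z₀⁻¹ ι_{z,z₀} f(φ(z,z₀),z)`,
written out coefficientwise in the conclusion below (the left-hand side being the
coefficient of `z^r` in `Res_{z₀} z₀⁻¹ ι_{z,z₀}h(φ(z,z₀),z)⁻¹·(h(z₁,z)α(z₁)β(z))|_{z₁=φ(z,z₀)}`). -/
theorem stmt17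
    (αp αm β : ℤ → Module.End ℂ W)
    -- field properties
    (hαmfield : ∀ w : W, ∃ N : ℤ, ∀ e < N, αm e w = 0)
    (hβfield : ∀ w : W, ∃ N : ℤ, ∀ e < N, β e w = 0)
    (hαp : ∀ e : ℤ, e < 0 → αp e = 0)
    -- [α^±(z₁), α^±(z₂)] = 0
    (hcp : ∀ e₁ e₂ : ℤ, αp e₁ * αp e₂ = αp e₂ * αp e₁)
    (hcm : ∀ e₁ e₂ : ℤ, αm e₁ * αm e₂ = αm e₂ * αm e₁)
    -- the rational function f = p/q and its two expansions
    (p q : ℤ → ℤ → ℂ)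
    (hpfin : (Function.support fun x : ℤ × ℤ => p x.1 x.2).Finite)
    (hqfin : (Function.support fun x : ℤ × ℤ => q x.1 x.2).Finite)
    (hpnn : ∀ i j : ℤ, (i < 0 ∨ j < 0) → p i j = 0)
    (hqnn : ∀ i j : ℤ, (i < 0 ∨ j < 0) → q i j = 0)
    (hqne : ∃ i j : ℤ, q i j ≠ 0)
    (Fι : ℤ → ℤ → ℂ)
    (hFιsupp : ∃ M : ℕ, ∀ a b : ℤ, ((M : ℤ) < a ∨ b < -(M : ℤ)) → Fι a b = 0)
    (hFι : ∀ d₁ d₂ : ℤ, ∑ᶠ (i : ℤ) (j : ℤ), q i j * Fι (d₁ - i) (d₂ - j) = p d₁ d₂)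
    (Fφ : ℤ → ℕ → ℂ)
    (hFφsupp : ∀ c : ℕ, ∃ N : ℤ, ∀ a < N, Fφ a c = 0)
    (hFφ : ∀ (a : ℤ) (c : ℕ),
      ∑ c' ∈ Finset.range (c + 1), ∑ᶠ a' : ℤ, substCoeff q a' c' * Fφ (a - a') (c - c')
        = substCoeff p a c)
    -- the commutation relation [α⁻(z₁), β(z₂)] = β(z₂)·ι_{z₁,z₂}f(z₁,z₂)
    (hrel : ∀ (e₁ e₂ : ℤ) (w : W),
      αm e₁ (β e₂ w) - β e₂ (αm e₁ w) = ∑ᶠ e : ℤ, Fι e₁ (e₂ - e) • β e w)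
    -- quasi-compatibility: h(z₁,z₂)α(z₁)β(z₂) ∈ E^{(2)}(W) for a nonzero polynomial h
    (h : ℤ → ℤ → ℂ)
    (hhfin : (Function.support fun x : ℤ × ℤ => h x.1 x.2).Finite)
    (hhnn : ∀ i j : ℤ, (i < 0 ∨ j < 0) → h i j = 0)
    (hhne : ∃ i j : ℤ, h i j ≠ 0)
    (hE2 : ∀ w : W, ∃ N : ℤ, ∀ a b : ℤ, (a < N ∨ b < N) →
      prodCoeff h (fun e => αp e + αm e) β a b w = 0)
    -- the expansion ι_{z,z₀} h(ze^{z₀}, z)⁻¹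
    (Hinv : ℤ → ℕ → ℂ)
    (hHinvsupp : ∀ c : ℕ, ∃ N : ℤ, ∀ a < N, Hinv a c = 0)
    (hHinv : ∀ (a : ℤ) (c : ℕ),
      ∑ c' ∈ Finset.range (c + 1), ∑ᶠ a' : ℤ, Hinv a' c' * substCoeff h (a - a') (c - c')
        = if a = 0 ∧ c = 0 then 1 else 0) :
    ∀ (r : ℤ) (w : W),
      (∑ᶠ a' : ℤ, Hinv a' 0 •
          (∑ᶠ a : ℤ, prodCoeff h (fun e => αp e + αm e) β a (r - a' - a) w))
        = (∑ᶠ e : ℤ, αp e (β (r - e) w)) + (∑ᶠ e : ℤ, β e (αm (r - e) w))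
          + ∑ᶠ e : ℤ, Fφ (r - e) 0 • β e w := by
  intro r w
  classical
  obtain ⟨M, hM⟩ := hFιsupp
  obtain ⟨Nβ, hNβ⟩ := hβfield w
  obtain ⟨Nm, hNm⟩ := hαmfield w
  obtain ⟨NE, hNE⟩ := hE2 w
  have hSh : ∀ i j : ℤ, h i j ≠ 0 → (i, j) ∈ hhfin.toFinset := fun i j hij =>
    hhfin.mem_toFinset.mpr hij
  have hSq : ∀ i j : ℤ, q i j ≠ 0 → (i, j) ∈ hqfin.toFinset := fun i j hij =>
    hqfin.mem_toFinset.mpr hij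
  have hSp : ∀ i j : ℤ, p i j ≠ 0 → (i, j) ∈ hpfin.toFinset := fun i j hij =>
    hpfin.mem_toFinset.mpr hij
  have hM0 : (0 : ℤ) ≤ (M : ℤ) := Int.natCast_nonneg M
  -- vanishing lemmas
  have hG2b : ∀ a b : ℤ, b < Nβ - (M : ℤ) → β b (αm a w) = 0 := by
    intro a b hb
    have h1 := hrel a b w
    have h2 : β b w = 0 := hNβ b (by omega)
    have h3 : (∑ᶠ e : ℤ, Fι a (b - e) • β e w) = 0 := by
      refine finsum_eq_zero_of_forall_eq_zero fun e => ?_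
      rcases lt_or_ge e Nβ with he | he
      · rw [hNβ e he, smul_zero]
      · rw [hM a (b - e) (Or.inr (by omega)), zero_smul]
    rw [h2, map_zero, h3, zero_sub, neg_eq_zero] at h1
    exact h1
  have hg3b : ∀ a b : ℤ, b < Nβ - (M : ℤ) → g3 Fι β w a b = 0 := by
    intro a b hb
    refine finsum_eq_zero_of_forall_eq_zero fun e => ?_
    rcases lt_or_ge e Nβ with he | he
    · rw [hNβ e he, smul_zero]
    · rw [hM a (b - e) (Or.inr (by omega)), zero_smul]
  have hg12a : ∀ a b : ℤ, a < min 0 Nm → g12 αp αm β w a b = 0 := by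
    intro a b ha
    show αp a (β b w) + β b (αm a w) = 0
    rw [hαp a (by omega), hNm a (by omega), map_zero, LinearMap.zero_apply, add_zero]
  have hg12b : ∀ a b : ℤ, b < Nβ - (M : ℤ) → g12 αp αm β w a b = 0 := by
    intro a b hb
    show αp a (β b w) + β b (αm a w) = 0
    rw [hNβ b (by omega), map_zero, hG2b a b hb, add_zero]
  have hgBa : ∀ a b : ℤ, a < 0 → gB β w a b = 0 := by
    intro a b ha
    show (if a = 0 then β b w else 0) = 0
    rw [if_neg (by omega)]
  have hgBb : ∀ a b : ℤ, b < Nβ → gB β w a b = 0 := by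
    intro a b hb
    show (if a = 0 then β b w else 0) = 0
    split_ifs
    · exact hNβ b hb
    · rfl
  -- decomposition via the commutation relation
  have F1 : ∀ a b : ℤ, prodCoeff h (fun e => αp e + αm e) β a b w
      = conv2 h (g12 αp αm β w) a b + conv2 h (g3 Fι β w) a b := by
    intro a b
    have hpt : ∀ i j : ℤ, h i j • (fun e => αp e + αm e) (a - i) (β (b - j) w)
        = h i j • g12 αp αm β w (a - i) (b - j) + h i j • g3 Fι β w (a - i) (b - j) := by
      intro i j
      have hc : αm (a - i) (β (b - j) w)
          = β (b - j) (αm (a - i) w) + ∑ᶠ e : ℤ, Fι (a - i) (b - j - e) • β e w := by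
        have h1 := sub_eq_iff_eq_add.mp (hrel (a - i) (b - j) w)
        rw [h1, add_comm]
      show h i j • ((αp (a - i) + αm (a - i)) (β (b - j) w)) = _
      rw [LinearMap.add_apply, hc, ← add_assoc, ← smul_add]
      rfl
    show (∑ᶠ (i : ℤ) (j : ℤ), h i j • (fun e => αp e + αm e) (a - i) (β (b - j) w)) = _
    rw [finsum_congr fun i => finsum_congr fun j => hpt i j]
    rw [fsum2_eq (fun i j => h i j • g12 αp αm β w (a - i) (b - j)
        + h i j • g3 Fι β w (a - i) (b - j)) hhfin.toFinset
      (fun i j hij => hSh i j (fun h0 => hij (by simp [h0])))]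
    rw [Finset.sum_add_distrib]
    congr 1
    · rw [conv2, fsum2_eq (fun i j => h i j • g12 αp αm β w (a - i) (b - j)) hhfin.toFinset
        (fun i j hij => hSh i j (fun h0 => hij (by simp [h0])))]
    · rw [conv2, fsum2_eq (fun i j => h i j • g3 Fι β w (a - i) (b - j)) hhfin.toFinset
        (fun i j hij => hSh i j (fun h0 => hij (by simp [h0])))]
  -- support bounds for the pieces
  have hP12a : ∀ a b : ℤ, a < min 0 Nm → conv2 h (g12 αp αm β w) a b = 0 :=
    conv2_lba h hhnn _ _ hg12a
  have hP12b : ∀ a b : ℤ, b < Nβ - (M : ℤ) → conv2 h (g12 αp αm β w) a b = 0 :=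
    conv2_lbb h hhnn _ _ hg12b
  have hP3a : ∀ a b : ℤ, a < min NE (min 0 Nm) → conv2 h (g3 Fι β w) a b = 0 := by
    intro a b ha
    have h1 := F1 a b
    have h2 : prodCoeff h (fun e => αp e + αm e) β a b w = 0 := hNE a b (Or.inl (by omega))
    have h3 : conv2 h (g12 αp αm β w) a b = 0 := hP12a a b (by omega)
    rw [h2, h3, zero_add] at h1
    exact h1.symm
  have hP3b : ∀ a b : ℤ, b < Nβ - (M : ℤ) → conv2 h (g3 Fι β w) a b = 0 :=
    conv2_lbb h hhnn _ _ hg3b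
  -- q * g3 = p * gB
  have Fq : conv2 q (g3 Fι β w) = conv2 p (gB β w) := by
    funext a b
    have hRHS : conv2 p (gB β w) a b = ∑ᶠ e : ℤ, p a (b - e) • β e w := by
      rw [conv2]
      rw [finsum_eq_single _ a]
      · have hgB0 : ∀ j : ℤ, gB β w (a - a) (b - j) = β (b - j) w := by
          intro j
          show (if a - a = 0 then β (b - j) w else 0) = _
          rw [if_pos (by ring)]
        rw [finsum_congr fun j => by rw [hgB0 j]]
        rw [← finsum_comp_equiv (Equiv.subLeft b)]
        refine finsum_congr fun e => ?_
        have e1 : (Equiv.subLeft b) e = b - e := rfl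
        rw [e1]
        have e2 : b - (b - e) = e := by ring
        rw [e2]
      · intro i hi
        refine finsum_eq_zero_of_forall_eq_zero fun j => ?_
        have hgB1 : gB β w (a - i) (b - j) = 0 := by
          show (if a - i = 0 then β (b - j) w else 0) = 0
          rw [if_neg (by omega)]
        rw [hgB1, smul_zero]
    rw [hRHS, conv2]
    rw [fsum2_eq (fun k l => q k l • g3 Fι β w (a - k) (b - l)) hqfin.toFinset
      (fun k l hkl => hSq k l (fun h0 => hkl (by simp [h0])))]
    have hmid : ∀ pp ∈ hqfin.toFinset,
        q pp.1 pp.2 • g3 Fι β w (a - pp.1) (b - pp.2)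
          = ∑ᶠ e : ℤ, (q pp.1 pp.2 * Fι (a - pp.1) (b - pp.2 - e)) • β e w := by
      intro pp _
      show q pp.1 pp.2 • (∑ᶠ e : ℤ, Fι (a - pp.1) (b - pp.2 - e) • β e w) = _
      rw [smul_finsum' _ (Set.Finite.subset (Set.finite_Icc Nβ (b - pp.2 + (M : ℤ))) ?_)]
      · exact finsum_congr fun e => smul_smul _ _ _
      · intro e he
        simp only [Function.mem_support] at he
        have hβ0 : β e w ≠ 0 := fun h0 => he (by simp [h0])
        have hFι0 : Fι (a - pp.1) (b - pp.2 - e) ≠ 0 := fun h0 => he (by simp [h0])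
        have hb1 : Nβ ≤ e := by by_contra hh; exact hβ0 (hNβ e (by omega))
        have hb2 : -(M : ℤ) ≤ b - pp.2 - e := by
          by_contra hh; exact hFι0 (hM _ _ (Or.inr (by omega)))
        exact Set.mem_Icc.mpr ⟨hb1, by omega⟩
    rw [Finset.sum_congr rfl hmid]
    rw [← fsum_finset_sum hqfin.toFinset
      (fun pp e => (q pp.1 pp.2 * Fι (a - pp.1) (b - pp.2 - e)) • β e w)
      (Finset.Icc Nβ (b + (M : ℤ))) ?_]
    · refine finsum_congr fun e => ?_
      rw [← Finset.sum_smul]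
      congr 1
      have hid := hFι a (b - e)
      rw [fsum2_eq (fun i j => q i j * Fι (a - i) (b - e - j)) hqfin.toFinset
        (fun i j hij => hSq i j (fun h0 => hij (by simp [h0])))] at hid
      rw [← hid]
      refine Finset.sum_congr rfl fun pp _ => ?_
      congr 2
      ring
    · intro pp hpp e he
      have hβ0 : β e w ≠ 0 := fun h0 => he (by simp [h0])
      have hq0 : q pp.1 pp.2 ≠ 0 := fun h0 => he (by simp [h0])
      have hFι0 : Fι (a - pp.1) (b - pp.2 - e) ≠ 0 := fun h0 => he (by simp [h0])
      have hb1 : Nβ ≤ e := by by_contra hh; exact hβ0 (hNβ e (by omega))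
      have hl : 0 ≤ pp.2 := by
        by_contra hh; exact hq0 (hqnn _ _ (Or.inr (by omega)))
      have hb2 : -(M : ℤ) ≤ b - pp.2 - e := by
        by_contra hh; exact hFι0 (hM _ _ (Or.inr (by omega)))
      exact Finset.mem_Icc.mpr ⟨hb1, by omega⟩
  -- the given convolution identities in gc form
  have hHfn : gc Hinv (substCoeff h) = dlt := by
    funext a c
    have hh1 := hHinv a c
    simp only [gc, smul_eq_mul, dlt]
    exact hh1
  have hFφfn : gc (substCoeff q) Fφ = substCoeff p := by
    funext a c
    have hh1 := hFφ a c
    simp only [gc, smul_eq_mul]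
    exact hh1
  -- lb facts
  have lbH : lb Hinv := hHinvsupp
  have lbFφ : lb Fφ := hFφsupp
  have lbhs : lb (substCoeff h) := lb_subst h hhnn
  have lbqs : lb (substCoeff q) := lb_subst q hqnn
  have lbps : lb (substCoeff p) := lb_subst p hpnn
  have lbB : lb (bB β w) := by
    intro c
    refine ⟨Nβ, fun x hx => ?_⟩
    show (if c = 0 then β x w else 0) = 0
    split_ifs
    · exact hNβ x hx
    · rfl
  have lbsubG12 : lb (sub2 (g12 αp αm β w)) := sub2_lb _ _ _ hg12a hg12b
  have lbsubP12 : lb (sub2 (conv2 h (g12 αp αm β w))) := sub2_lb _ _ _ hP12a hP12b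
  have lbsubP3 : lb (sub2 (conv2 h (g3 Fι β w))) := sub2_lb _ _ _ hP3a hP3b
  have lbsubtot : lb (sub2 (fun a b => prodCoeff h (fun e => αp e + αm e) β a b w)) :=
    sub2_lb _ NE NE (fun a b ha => hNE a b (Or.inl ha)) (fun a b hb => hNE a b (Or.inr hb))
  have lbsubGp : lb (sub2 (conv2 p (gB β w))) :=
    sub2_lb _ 0 Nβ (conv2_lba p hpnn _ _ hgBa) (conv2_lbb p hpnn _ _ hgBb)
  -- C1 : split of sub2 total
  have C1 : sub2 (fun a b => prodCoeff h (fun e => αp e + αm e) β a b w)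
      = fun x c => sub2 (conv2 h (g12 αp αm β w)) x c + sub2 (conv2 h (g3 Fι β w)) x c := by
    funext x c
    simp only [sub2]
    have hpt : ∀ t : ℤ, stw c t • prodCoeff h (fun e => αp e + αm e) β t (x - t) w
        = stw c t • conv2 h (g12 αp αm β w) t (x - t)
          + stw c t • conv2 h (g3 Fι β w) t (x - t) := by
      intro t; rw [F1 t (x - t), smul_add]
    rw [finsum_congr hpt]
    refine finsum_add_distrib ?_ ?_
    · refine Set.Finite.subset (Set.finite_Icc (min 0 Nm) (x - (Nβ - (M : ℤ)))) ?_
      intro t ht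
      simp only [Function.mem_support] at ht
      have h1 : conv2 h (g12 αp αm β w) t (x - t) ≠ 0 := fun h0 => ht (by simp [h0])
      constructor
      · by_contra hh; exact h1 (hP12a _ _ (by simp at hh ⊢; omega))
      · by_contra hh; exact h1 (hP12b _ _ (by simp at hh ⊢; omega))
    · refine Set.Finite.subset (Set.finite_Icc (min NE (min 0 Nm)) (x - (Nβ - (M : ℤ)))) ?_
      intro t ht
      simp only [Function.mem_support] at ht
      have h1 : conv2 h (g3 Fι β w) t (x - t) ≠ 0 := fun h0 => ht (by simp [h0])
      constructor
      · by_contra hh; exact h1 (hP3a _ _ (by simp at hh ⊢; omega))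
      · by_contra hh; exact h1 (hP3b _ _ (by simp at hh ⊢; omega))
  -- sub-multiplicativity instances
  have C2 : sub2 (conv2 h (g12 αp αm β w)) = gc (substCoeff h) (sub2 (g12 αp αm β w)) :=
    sub2_conv2 h hhfin.toFinset hSh hhnn _ _ _ hg12a hg12b
  have C6a : sub2 (conv2 q (conv2 h (g3 Fι β w)))
      = gc (substCoeff q) (sub2 (conv2 h (g3 Fι β w))) :=
    sub2_conv2 q hqfin.toFinset hSq hqnn _ _ _ hP3a hP3b
  have C6b : conv2 q (conv2 h (g3 Fι β w)) = conv2 h (conv2 q (g3 Fι β w)) :=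
    conv2_swap q h hqfin.toFinset hhfin.toFinset hSq hSh _
  have C6d : sub2 (conv2 h (conv2 p (gB β w)))
      = gc (substCoeff h) (sub2 (conv2 p (gB β w))) :=
    sub2_conv2 h hhfin.toFinset hSh hhnn _ 0 Nβ (conv2_lba p hpnn _ _ hgBa)
      (conv2_lbb p hpnn _ _ hgBb)
  have C8a : sub2 (conv2 p (gB β w)) = gc (substCoeff p) (sub2 (gB β w)) :=
    sub2_conv2 p hpfin.toFinset hSp hpnn _ 0 Nβ hgBa hgBb
  have C8b : sub2 (gB β w) = bB β w := by
    funext x c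
    simp only [sub2]
    rw [finsum_eq_single _ (0 : ℤ)]
    · show stw c 0 • gB β w 0 (x - 0) = bB β w x c
      rw [stw_zero]
      show (if c = 0 then (1 : ℂ) else 0) • (if (0 : ℤ) = 0 then β (x - 0) w else 0)
          = (if c = 0 then β x w else 0)
      rw [if_pos rfl]
      have e0 : x - 0 = x := by ring
      rw [e0]
      split_ifs
      · rw [one_smul]
      · rw [zero_smul]
    · intro t ht
      have hgB1 : gB β w t (x - t) = 0 := by
        show (if t = 0 then β (x - t) w else 0) = 0
        rw [if_neg ht]
      rw [hgB1, smul_zero]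
  -- X assembly
  have X1 : gc Hinv (sub2 (fun a b => prodCoeff h (fun e => αp e + αm e) β a b w))
      = fun x c => gc Hinv (sub2 (conv2 h (g12 αp αm β w))) x c
          + gc Hinv (sub2 (conv2 h (g3 Fι β w))) x c := by
    rw [C1]
    exact gc_add_right Hinv _ _ lbH lbsubP12 lbsubP3
  have X2 : gc Hinv (sub2 (conv2 h (g12 αp αm β w))) = sub2 (g12 αp αm β w) := by
    rw [C2, gc_assoc Hinv (substCoeff h) _ lbH lbhs lbsubG12, hHfn, gc_dlt]
  have lbZ : lb (gc Hinv (sub2 (conv2 h (g3 Fι β w)))) := gc_lb lbH lbsubP3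
  have lbY : lb (gc Fφ (bB β w)) := gc_lb lbFφ lbB
  have inner3 : gc (substCoeff q) (sub2 (conv2 h (g3 Fι β w)))
      = gc (substCoeff h) (gc (substCoeff p) (bB β w)) := by
    rw [← C6a, C6b, Fq, C6d, C8a, C8b]
  have key3 : gc (substCoeff q) (gc Hinv (sub2 (conv2 h (g3 Fι β w))))
      = gc (substCoeff p) (bB β w) := by
    rw [gc_assoc (substCoeff q) Hinv _ lbqs lbH lbsubP3]
    rw [gc_comm' (substCoeff q) Hinv]
    rw [← gc_assoc Hinv (substCoeff q) _ lbH lbqs lbsubP3]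
    rw [inner3]
    rw [gc_assoc Hinv (substCoeff h) _ lbH lbhs (gc_lb lbps lbB), hHfn, gc_dlt]
  have keyY : gc (substCoeff q) (gc Fφ (bB β w)) = gc (substCoeff p) (bB β w) := by
    rw [gc_assoc _ Fφ _ lbqs lbFφ lbB, hFφfn]
  -- cancellation
  have hZY : gc Hinv (sub2 (conv2 h (g3 Fι β w))) = gc Fφ (bB β w) := by
    have hsubne : ∃ a c, substCoeff q a c ≠ 0 := by
      refine subst_ne q hqfin.toFinset hSq ?_
      obtain ⟨i, j, hij⟩ := hqne
      exact ⟨i, j, hij⟩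
    have hq0 := gc_sub_right (substCoeff q) (gc Hinv (sub2 (conv2 h (g3 Fι β w))))
      (gc Fφ (bB β w)) lbqs lbZ lbY
    have lbD : lb (fun x y => gc Hinv (sub2 (conv2 h (g3 Fι β w))) x y - gc Fφ (bB β w) x y) := by
      intro c
      obtain ⟨N1, h1⟩ := lbZ c
      obtain ⟨N2, h2⟩ := lbY c
      refine ⟨min N1 N2, fun a ha => ?_⟩
      show gc Hinv (sub2 (conv2 h (g3 Fι β w))) a c - gc Fφ (bB β w) a c = 0
      rw [h1 a (by omega), h2 a (by omega), sub_zero]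
    have hcancel := gc_cancel (substCoeff q) lbqs hsubne _ lbD ?_
    · funext a c
      have := hcancel a c
      exact sub_eq_zero.mp this
    · intro a c
      rw [hq0]
      simp only []
      rw [key3, keyY, sub_self]
  -- final evaluation at (r, 0)
  have Efinal : gc Hinv (sub2 (fun a b => prodCoeff h (fun e => αp e + αm e) β a b w)) r 0
      = sub2 (g12 αp αm β w) r 0 + gc Fφ (bB β w) r 0 := by
    rw [X1]
    simp only []
    rw [X2, hZY]
  have E1 : (∑ᶠ a' : ℤ, Hinv a' 0 •
        (∑ᶠ a : ℤ, prodCoeff h (fun e => αp e + αm e) β a (r - a' - a) w))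
      = gc Hinv (sub2 (fun a b => prodCoeff h (fun e => αp e + αm e) β a b w)) r 0 := by
    rw [gc]
    simp only [zero_add, Finset.sum_range_one, Nat.sub_zero]
    refine finsum_congr fun a' => ?_
    congr 1
    simp only [sub2]
    refine finsum_congr fun t => ?_
    rw [stw_zero', one_smul]
  have E2 : sub2 (g12 αp αm β w) r 0
      = (∑ᶠ e : ℤ, αp e (β (r - e) w)) + (∑ᶠ e : ℤ, β e (αm (r - e) w)) := by
    simp only [sub2]
    have hpt : ∀ t : ℤ, stw 0 t • g12 αp αm β w t (r - t)
        = αp t (β (r - t) w) + β (r - t) (αm t w) := by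
      intro t; rw [stw_zero', one_smul]; rfl
    rw [finsum_congr hpt]
    rw [finsum_add_distrib ?_ ?_]
    · congr 1
      rw [← finsum_comp_equiv (Equiv.subLeft r)]
      refine finsum_congr fun e => ?_
      have e1 : (Equiv.subLeft r) e = r - e := rfl
      rw [e1]
      have e2 : r - (r - e) = e := by ring
      rw [e2]
    · refine Set.Finite.subset (Set.finite_Icc 0 (r - Nβ)) ?_
      intro t ht
      simp only [Function.mem_support] at ht
      constructor
      · by_contra hh
        exact ht (by rw [hαp t (by simp at hh ⊢; omega), LinearMap.zero_apply])
      · by_contra hh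
        exact ht (by rw [hNβ (r - t) (by simp at hh ⊢; omega), map_zero])
    · refine Set.Finite.subset (Set.finite_Icc Nm (r - (Nβ - (M : ℤ)))) ?_
      intro t ht
      simp only [Function.mem_support] at ht
      constructor
      · by_contra hh
        exact ht (by rw [hNm t (by simp at hh ⊢; omega), map_zero])
      · by_contra hh
        exact ht (hG2b t (r - t) (by simp at hh ⊢; omega))
  have E3 : gc Fφ (bB β w) r 0 = ∑ᶠ e : ℤ, Fφ (r - e) 0 • β e w := by
    rw [gc]
    simp only [zero_add, Finset.sum_range_one, Nat.sub_zero]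
    have hpt : ∀ a' : ℤ, Fφ a' 0 • bB β w (r - a') 0 = Fφ a' 0 • β (r - a') w := by
      intro a'
      show Fφ a' 0 • (if (0 : ℕ) = 0 then β (r - a') w else 0) = _
      rw [if_pos rfl]
    rw [finsum_congr hpt]
    rw [← finsum_comp_equiv (Equiv.subLeft r)]
    refine finsum_congr fun e => ?_
    have e1 : (Equiv.subLeft r) e = r - e := rfl
    rw [e1]
    have e2 : r - (r - e) = e := by ring
    rw [e2]
  rw [E1, Efinal, E2, E3]
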